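/- Let X be a topological space and let f : X → ℝ be a first Baire class function. Then f is a first functional Lebesgue class function, i.e. for every open set G ⊆ ℝ the preimage f⁻¹(G) is a countable union of functionally closed subsets of X. -/

import Mathlib

open Set Filter Topology TopologicalSpace

/-- A subset `A` of a topological space is functionally closed if it is the
zero set of a continuous real-valued function. -/
def FunctionallyClosed {X : Type*} [TopologicalSpace X] (A : Set X) : Prop :=
  ∃ g : X → ℝ, Continuous g ∧ A = g ⁻¹' {0}

/-- `A` is a countable union of functionally closed subsets. -/
def CountableUnionOfFunctionallyClosed {X : Type*} [TopologicalSpace X] (A : Set X) : Prop :=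
  ∃ F : ℕ → Set X, (∀ n, FunctionallyClosed (F n)) ∧ A = ⋃ n, F n

/-- `f : X → ℝ` is a first Baire class function: a pointwise limit of a
sequence of continuous functions. -/
def BaireOne {X : Type*} [TopologicalSpace X] (f : X → ℝ) : Prop :=
  ∃ g : ℕ → X → ℝ, (∀ n, Continuous (g n)) ∧
    ∀ x, Tendsto (fun n => g n x) atTop (𝓝 (f x))

lemma fc_empty {X : Type*} [TopologicalSpace X] : FunctionallyClosed (∅ : Set X) :=
  ⟨fun _ => 1, continuous_const, by ext x; simp⟩

lemma fc_closedBall {X : Type*} [TopologicalSpace X] (h : X → ℝ) (hh : Continuous h)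
    (q r : ℝ) : FunctionallyClosed (h ⁻¹' Metric.closedBall q r) := by
  refine ⟨fun x => max (dist (h x) q - r) 0, by fun_prop, ?_⟩
  ext x
  simp only [mem_preimage, Metric.mem_closedBall, mem_singleton_iff, max_eq_right_iff,
    sub_nonpos]

lemma fc_iInter {X : Type*} [TopologicalSpace X] (A : ℕ → Set X)
    (hA : ∀ n, FunctionallyClosed (A n)) : FunctionallyClosed (⋂ n, A n) := by
  choose g hg hgA using hA
  have hbd : ∀ n x, ‖(1/2 : ℝ) ^ n * min 1 |g n x|‖ ≤ (1/2 : ℝ) ^ n := by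
    intro n x
    have h0 : (0:ℝ) ≤ min 1 |g n x| := le_min zero_le_one (abs_nonneg _)
    have h1 : min 1 |g n x| ≤ 1 := min_le_left _ _
    rw [Real.norm_eq_abs, abs_mul, abs_of_nonneg (by positivity : (0:ℝ) ≤ (1/2:ℝ)^n),
      abs_of_nonneg h0]
    calc (1/2:ℝ)^n * min 1 |g n x| ≤ (1/2:ℝ)^n * 1 := by
          exact mul_le_mul_of_nonneg_left h1 (by positivity)
      _ = (1/2:ℝ)^n := mul_one _
  have hterm_nonneg : ∀ n x, (0:ℝ) ≤ (1/2 : ℝ) ^ n * min 1 |g n x| := by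
    intro n x
    have h0 : (0:ℝ) ≤ min 1 |g n x| := le_min zero_le_one (abs_nonneg _)
    positivity
  have hsum : ∀ x, Summable fun n => (1/2 : ℝ) ^ n * min 1 |g n x| := by
    intro x
    refine Summable.of_nonneg_of_le (fun n => hterm_nonneg n x) (fun n => ?_)
      summable_geometric_two
    have := hbd n x
    rwa [Real.norm_eq_abs, abs_of_nonneg (hterm_nonneg n x)] at this
  refine ⟨fun x => ∑' n, (1/2 : ℝ) ^ n * min 1 |g n x|, ?_, ?_⟩
  · exact continuous_tsum
      (fun n => ((continuous_const.mul ((continuous_const.min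
        ((hg n).abs))))))
      summable_geometric_two hbd
  · ext x
    simp only [mem_iInter, mem_preimage, mem_singleton_iff]
    constructor
    · intro hx
      have : ∀ n, (1/2 : ℝ) ^ n * min 1 |g n x| = 0 := by
        intro n
        have hgx : g n x = 0 := by
          have := hx n
          rw [hgA n] at this
          exact this
        simp [hgx]
      simp only [this]
      exact tsum_zero
    · intro hx n
      rw [hgA n]
      have hle : (1/2 : ℝ) ^ n * min 1 |g n x| ≤ 0 := by
        rw [← hx]
        exact (hsum x).le_tsum n (fun j _ => hterm_nonneg j x)
      have heq : (1/2 : ℝ) ^ n * min 1 |g n x| = 0 :=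
        le_antisymm hle (hterm_nonneg n x)
      have h2 : min 1 |g n x| = 0 := by
        have hp : (0:ℝ) < (1/2:ℝ)^n := by positivity
        exact (mul_eq_zero.mp heq).resolve_left (ne_of_gt hp)
      have : |g n x| = 0 := by
        rcases min_eq_iff.mp h2 with ⟨h, _⟩ | ⟨h, _⟩
        · norm_num at h
        · exact h
      simpa [mem_preimage, mem_singleton_iff, abs_eq_zero] using this

theorem baire_one_is_first_functional_lebesgue
    {X : Type*} [TopologicalSpace X] (f : X → ℝ) (hf : BaireOne f) :
    ∀ G : Set ℝ, IsOpen G → CountableUnionOfFunctionallyClosed (f ⁻¹' G) := by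
  classical
  intro G hG
  obtain ⟨g, hg, hlim⟩ := hf
  set F : ℚ × ℕ × ℕ → Set X := fun p =>
    if Metric.closedBall (p.1 : ℝ) (2 / (p.2.1 + 1)) ⊆ G then
      ⋂ m, g (p.2.2 + m) ⁻¹' Metric.closedBall (p.1 : ℝ) (1 / (p.2.1 + 1))
    else ∅ with hF
  have e : ℕ ≃ (ℚ × ℕ × ℕ) := (Denumerable.eqv (ℚ × ℕ × ℕ)).symm
  refine ⟨fun n => F (e n), fun n => ?_, ?_⟩
  · rw [hF]
    dsimp only
    split
    · exact fc_iInter _ fun m => fc_closedBall _ (hg _) _ _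
    · exact fc_empty
  · ext x
    simp only [mem_preimage, mem_iUnion]
    constructor
    · intro hx
      obtain ⟨ε, hε, hball⟩ := Metric.isOpen_iff.mp hG (f x) hx
      obtain ⟨k, hk⟩ := exists_nat_one_div_lt (show (0:ℝ) < ε / 3 by linarith)
      have hk1 : (0:ℝ) < 1 / (k + 1) := by positivity
      obtain ⟨q, hq⟩ := exists_rat_near (f x) hk1
      -- hq : |(f x) - q| < 1/(k+1)  (check orientation)
      have hsub : Metric.closedBall (q : ℝ) (2 / (k + 1)) ⊆ G := by
        intro y hy
        apply hball
        rw [Metric.mem_ball, Real.dist_eq]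
        rw [Metric.mem_closedBall, Real.dist_eq] at hy
        have h1 : |(f x) - q| < 1 / (k + 1) := hq
        have : |y - f x| ≤ |y - q| + |(q:ℝ) - f x| := abs_sub_le _ _ _
        have h2 : |(q:ℝ) - f x| < 1 / (k + 1) := by rwa [abs_sub_comm]
        have h3 : |y - f x| < 3 / (k + 1) := by
          have : (2:ℝ) / (k+1) + 1/(k+1) = 3/(k+1) := by ring
          linarith
        have h4 : (3:ℝ) / (k + 1) < ε := by
          have : (3:ℝ)/(k+1) = 3 * (1/(k+1)) := by ring
          rw [this]
          linarith
        linarith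
      have hδ : (0:ℝ) < 1 / (k + 1) - |(f x) - q| := by linarith [hq]
      obtain ⟨N, hN⟩ := (Metric.tendsto_atTop.mp (hlim x)) _ hδ
      refine ⟨e.symm (q, k, N), ?_⟩
      rw [hF]
      simp only [Equiv.apply_symm_apply]
      rw [if_pos hsub]
      simp only [mem_iInter, mem_preimage, Metric.mem_closedBall, Real.dist_eq]
      intro m
      have hNm := hN (N + m) (Nat.le_add_right _ _)
      rw [Real.dist_eq] at hNm
      have : |g (N + m) x - q| ≤ |g (N + m) x - f x| + |(f x) - q| := abs_sub_le _ _ _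
      linarith
    · rintro ⟨n, hn⟩
      rw [hF] at hn
      dsimp only at hn
      by_cases hc : Metric.closedBall ((e n).1 : ℝ) (2 / ((e n).2.1 + 1)) ⊆ G
      · rw [if_pos hc] at hn
        simp only [mem_iInter, mem_preimage, Metric.mem_closedBall] at hn
        apply hc
        rw [Metric.mem_closedBall]
        have hlim' : Tendsto (fun m => g ((e n).2.2 + m) x) atTop (𝓝 (f x)) := by
          have := (hlim x).comp (tendsto_add_atTop_nat (e n).2.2)
          simpa [Function.comp_def, Nat.add_comm] using this
        have hd : Tendsto (fun m => dist (g ((e n).2.2 + m) x) ((e n).1 : ℝ)) atTop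
            (𝓝 (dist (f x) ((e n).1 : ℝ))) :=
          (Continuous.dist continuous_id continuous_const).continuousAt.tendsto.comp hlim'
        have h1 : dist (f x) ((e n).1 : ℝ) ≤ 1 / ((e n).2.1 + 1) :=
          le_of_tendsto hd (Eventually.of_forall fun m => hn m)
        have h2 : (1:ℝ) / ((e n).2.1 + 1) ≤ 2 / ((e n).2.1 + 1) := by
          apply div_le_div_of_nonneg_right one_le_two
          positivity
        linarith
      · rw [if_neg hc] at hn
        exact absurd hn (notMem_empty x)
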